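/- Let n ≥ 1, let η = (η_{pq}) be an invertible skew-symmetric n×n complex matrix, let U ⊆ ℂ^{2n} be open with coordinates (z₁,…,z_n,θ₁,…,θ_n), and let W : U → ℂ be holomorphic satisfying Plebański's second heavenly equations ∂²W/∂θ_i∂z_j − ∂²W/∂θ_j∂z_i = Σ_{p,q} η_{pq}·(∂²W/∂θ_i∂θ_p)·(∂²W/∂θ_j∂θ_q) on U for all i, j. Set W_i = ∂W/∂θ_i and define vector fields v_i = ∂/∂θ_i and h_i = ∂/∂z_i + Σ_{p,q} η_{pq}·(∂W_i/∂θ_p)·∂/∂θ_q. Then for every ε ∈ ℂ∖{0} the vector fields h_i + ε⁻¹v_i pairwise commute on U. -/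

import Mathlib

open Complex Metric MeasureTheory Set
open scoped Real Topology

noncomputable def vecBracket {E : Type*} [NormedAddCommGroup E] [NormedSpace ℂ E]
    (X Y : E → E) (x : E) : E :=
  fderiv ℂ Y x (X x) - fderiv ℂ X x (Y x)

noncomputable def dz {n : ℕ} (f : (Fin n → ℂ) × (Fin n → ℂ) → ℂ) (j : Fin n)
    (x : (Fin n → ℂ) × (Fin n → ℂ)) : ℂ :=
  fderiv ℂ f x (Pi.single j 1, 0)

noncomputable def dθ {n : ℕ} (f : (Fin n → ℂ) × (Fin n → ℂ) → ℂ) (j : Fin n)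
    (x : (Fin n → ℂ) × (Fin n → ℂ)) : ℂ :=
  fderiv ℂ f x (0, Pi.single j 1)

abbrev EP (n : ℕ) := (Fin n → ℂ) × (Fin n → ℂ)

/-- z-basis vectors. -/
def ezv (n : ℕ) (i : Fin n) : EP n := (Pi.single i 1, 0)
/-- θ-basis vectors. -/
def eθv (n : ℕ) (i : Fin n) : EP n := (0, Pi.single i 1)

section Analytic

variable {E : Type*} [NormedAddCommGroup E] [NormedSpace ℂ E] {U : Set E}
variable [ProperSpace E] [MeasurableSpace E] [BorelSpace E]
  [SecondCountableTopology (E →L[ℂ] ℂ)]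

/-- Cauchy-type bound for the full Fréchet derivative of a holomorphic function. -/
lemma norm_fderiv_le_of_closedBall (hU : IsOpen U) {f : E → ℂ} (hf : DifferentiableOn ℂ f U)
    {x : E} {R M : ℝ} (hR : 0 < R) (hsub : closedBall x (2 * R) ⊆ U)
    (hM : ∀ z ∈ closedBall x (2 * R), ‖f z‖ ≤ M) {p : E} (hp : p ∈ closedBall x R) :
    ‖fderiv ℂ f p‖ ≤ M / R := by
  have hM0 : 0 ≤ M := le_trans (norm_nonneg _) (hM x (mem_closedBall_self (by positivity)))
  refine ContinuousLinearMap.opNorm_le_bound _ (div_nonneg hM0 hR.le) fun w => ?_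
  rcases eq_or_ne w 0 with rfl | hw
  · simp
  · set u : E := ‖w‖⁻¹ • w with hu
    have hun : ‖u‖ = 1 := norm_smul_inv_norm hw
    have hmem : ∀ z : ℂ, ‖z‖ ≤ R → p + z • u ∈ closedBall x (2 * R) := by
      intro z hz
      have : ‖p + z • u - x‖ ≤ ‖p - x‖ + ‖z • u‖ := by
        have : p + z • u - x = (p - x) + z • u := by abel
        rw [this]; exact norm_add_le _ _
      refine mem_closedBall_iff_norm.2 (this.trans ?_)
      rw [norm_smul, hun, mul_one]
      have h1 : ‖p - x‖ ≤ R := mem_closedBall_iff_norm.1 hp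
      have h2 : ‖z‖ ≤ R := hz
      linarith
    set s : ℂ → ℂ := fun z => f (p + z • u) with hs
    have hsdiff : ∀ z : ℂ, ‖z‖ ≤ R → DifferentiableAt ℂ s z := by
      intro z hz
      have h1 : DifferentiableAt ℂ (fun z : ℂ => p + z • u) z :=
        (differentiableAt_id.smul_const u).const_add p
      exact (hf.differentiableAt (hU.mem_nhds (hsub (hmem z hz)))).comp z h1
    have hdc : DiffContOnCl ℂ s (ball (0 : ℂ) R) := by
      refine ⟨fun z hz => (hsdiff z ?_).differentiableWithinAt, ?_⟩
      · simpa using (mem_ball_zero_iff.1 hz).le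
      · intro z hz
        have hz' : ‖z‖ ≤ R := by
          have := closure_ball_subset_closedBall hz
          simpa using mem_closedBall_zero_iff.1 this
        exact (hsdiff z hz').continuousAt.continuousWithinAt
    have hder : HasDerivAt s (fderiv ℂ f p u) 0 := by
      have h1 : HasDerivAt (fun z : ℂ => p + z • u) u 0 := by
        simpa using ((hasDerivAt_id (0 : ℂ)).smul_const u).const_add p
      have h2 : DifferentiableAt ℂ f (p + (0 : ℂ) • u) := by
        simpa using hf.differentiableAt (hU.mem_nhds (hsub (hmem 0 (by simp [hR.le]))))
      have := h2.hasFDerivAt.comp_hasDerivAt (0 : ℂ) h1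
      simp only [zero_smul, add_zero] at this
      exact this
    have hb : ‖deriv s 0‖ ≤ M / R := by
      refine Complex.norm_deriv_le_of_forall_mem_sphere_norm_le hR hdc fun z hz => ?_
      have hz' : ‖z‖ ≤ R := by
        rw [mem_sphere_zero_iff_norm] at hz
        exact le_of_eq hz
      exact hM _ (hmem z hz')
    rw [hder.deriv] at hb
    have hwu : w = (‖w‖ : ℝ) • u := by
      rw [hu, smul_smul, mul_inv_cancel₀ (norm_ne_zero_iff.2 hw), one_smul]
    calc ‖fderiv ℂ f p w‖ = ‖fderiv ℂ f p ((‖w‖ : ℝ) • u)‖ := by rw [← hwu]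
      _ = ‖w‖ * ‖fderiv ℂ f p u‖ := by
          rw [(fderiv ℂ f p).map_smul_of_tower, norm_smul, Real.norm_eq_abs, abs_norm]
      _ ≤ ‖w‖ * (M / R) := by
          exact mul_le_mul_of_nonneg_left hb (norm_nonneg _)
      _ = M / R * ‖w‖ := mul_comm _ _


/-- A directional derivative of a holomorphic function is differentiable. -/
lemma differentiableAt_fderiv_apply (hU : IsOpen U) {f : E → ℂ}
    (hf : DifferentiableOn ℂ f U) (e : E) {x : E} (hx : x ∈ U) :
    DifferentiableAt ℂ (fun y => fderiv ℂ f y e) x := by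
  obtain ⟨R₀, hR₀pos, hR₀sub⟩ : ∃ R > 0, closedBall x R ⊆ U := by
    rcases Metric.nhds_basis_closedBall.mem_iff.1 (hU.mem_nhds hx) with ⟨R, hR, hsub⟩
    exact ⟨R, hR, hsub⟩
  set R : ℝ := R₀ / 2 with hRdef
  have hR : 0 < R := by positivity
  have hsub2 : closedBall x (2 * R) ⊆ U := by
    rw [hRdef]; ring_nf; simpa using hR₀sub
  obtain ⟨M, hM⟩ : ∃ M, ∀ z ∈ closedBall x (2 * R), ‖f z‖ ≤ M :=
    (isCompact_closedBall x (2 * R)).exists_bound_of_continuousOn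
      ((hf.continuousOn).mono hsub2)
  have hMd : ∀ p ∈ closedBall x R, ‖fderiv ℂ f p‖ ≤ M / R := fun p hp =>
    norm_fderiv_le_of_closedBall hU hf hR hsub2 hM hp
  set r : ℝ := R / (2 * (‖e‖ + 1)) with hrdef
  have hr : 0 < r := by
    have : (0:ℝ) < ‖e‖ + 1 := by positivity
    positivity
  set δ : ℝ := R / 2 with hδdef
  have hδ : 0 < δ := by positivity
  have hmem : ∀ y ∈ ball x δ, ∀ z : ℂ, ‖z‖ ≤ r → y + z • e ∈ closedBall x R := by
    intro y hy z hz
    have h1 : ‖y + z • e - x‖ ≤ ‖y - x‖ + ‖z • e‖ := by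
      have : y + z • e - x = (y - x) + z • e := by abel
      rw [this]; exact norm_add_le _ _
    refine mem_closedBall_iff_norm.2 (h1.trans ?_)
    have h2 : ‖y - x‖ < δ := mem_ball_iff_norm.1 hy
    have h3 : ‖z • e‖ ≤ r * (‖e‖ + 1) := by
      rw [norm_smul]
      have hzr : ‖z‖ ≤ r := hz
      have he : ‖e‖ ≤ ‖e‖ + 1 := by linarith
      exact mul_le_mul hzr he (norm_nonneg _) hr.le
    have h4 : r * (‖e‖ + 1) = R / 2 := by
      rw [hrdef]
      have : ‖e‖ + 1 ≠ 0 := by positivity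
      field_simp
    rw [h4] at h3
    rw [hδdef] at h2
    linarith
  have hmemU : ∀ y ∈ ball x δ, ∀ z : ℂ, ‖z‖ ≤ r → y + z • e ∈ U :=
    fun y hy z hz => hsub2 (closedBall_subset_closedBall (by linarith) (hmem y hy z hz))
  set μ : Measure ℝ := volume.restrict (Ioc (0:ℝ) (2 * π)) with hμdef
  set K : E → ℝ → ℂ := fun y θ =>
    (circleMap 0 r θ * I) • (((circleMap 0 r θ) ^ 2)⁻¹ • f (y + circleMap 0 r θ • e)) with hKdef
  set K' : E → ℝ → E →L[ℂ] ℂ := fun y θ =>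
    (circleMap 0 r θ * I) • (((circleMap 0 r θ) ^ 2)⁻¹ • fderiv ℂ f (y + circleMap 0 r θ • e))
    with hK'def
  have habs : ∀ θ : ℝ, ‖circleMap 0 r θ‖ = r := by
    intro θ; rw [norm_circleMap_zero]; exact abs_of_pos hr
  have habs' : ∀ θ : ℝ, ‖circleMap 0 r θ‖ ≤ r := fun θ => (habs θ).le
  -- representation of the directional derivative as an integral
  have hrep : ∀ y ∈ ball x δ, fderiv ℂ f y e = (2 * π * I : ℂ)⁻¹ • ∫ θ, K y θ ∂μ := by
    intro y hy
    set V : Set ℂ := (fun z : ℂ => y + z • e) ⁻¹' U with hVdef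
    have hVopen : IsOpen V :=
      hU.preimage (continuous_const.add (continuous_id.smul continuous_const))
    have hVsub : closedBall (0:ℂ) r ⊆ V := by
      intro z hz
      exact hmemU y hy z (mem_closedBall_zero_iff.1 hz)
    have hfV : DifferentiableOn ℂ (fun z : ℂ => f (y + z • e)) V := by
      intro z hz
      have h1 : DifferentiableAt ℂ (fun z : ℂ => y + z • e) z :=
        (differentiableAt_id.smul_const e).const_add y
      exact ((hf.differentiableAt (hU.mem_nhds hz)).comp z h1).differentiableWithinAt
    have h0 : (0:ℂ) ∈ ball (0:ℂ) r := mem_ball_self hr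
    have hcirc := Complex.two_pi_I_inv_smul_circleIntegral_sub_sq_inv_smul_of_differentiable
      hVopen hVsub hfV h0
    have hder : deriv (fun z : ℂ => f (y + z • e)) 0 = fderiv ℂ f y e := by
      have h1 : HasDerivAt (fun z : ℂ => y + z • e) e 0 := by
        simpa using ((hasDerivAt_id (0:ℂ)).smul_const e).const_add y
      have h2 : DifferentiableAt ℂ f (y + (0:ℂ) • e) := by
        simpa using hf.differentiableAt (hU.mem_nhds (hmemU y hy 0 (by simp [hr.le])))
      have h3 := h2.hasFDerivAt.comp_hasDerivAt (0:ℂ) h1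
      simp only [zero_smul, add_zero] at h3
      exact h3.deriv
    rw [hder] at hcirc
    rw [← hcirc]
    congr 1
    rw [circleIntegral]
    simp only [deriv_circleMap, sub_zero, zero_add]
    rw [intervalIntegral.integral_of_le (by positivity : (0:ℝ) ≤ 2 * π)]
  -- continuity of the integrand
  have hcont : ∀ y ∈ ball x δ, Continuous (K y) := by
    intro y hy
    have h1 : Continuous fun θ : ℝ => circleMap 0 r θ * I :=
      (continuous_circleMap 0 r).mul continuous_const
    have h2 : Continuous fun θ : ℝ => ((circleMap 0 r θ) ^ 2 : ℂ)⁻¹ :=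
      ((continuous_circleMap 0 r).pow 2).inv₀ fun θ =>
        pow_ne_zero 2 (circleMap_ne_center hr.ne')
    have h3 : Continuous fun θ : ℝ => f (y + circleMap 0 r θ • e) := by
      rw [continuous_iff_continuousAt]
      intro θ
      have hpt : y + circleMap 0 r θ • e ∈ U := hmemU y hy _ (habs' θ)
      have hg : Continuous fun θ : ℝ => y + circleMap 0 r θ • e :=
        continuous_const.add ((continuous_circleMap 0 r).smul continuous_const)
      have hc : ContinuousAt (f ∘ fun θ : ℝ => y + circleMap 0 r θ • e) θ :=
        ContinuousAt.comp (hf.differentiableAt (hU.mem_nhds hpt)).continuousAt hg.continuousAt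
      exact hc
    exact h1.smul (h2.smul h3)
  -- the parametric-integral differentiation
  have hK_int : Integrable (K x) μ :=
    ((hcont x (mem_ball_self hδ)).intervalIntegrable 0 (2 * π)).1
  have hK_meas : ∀ᶠ y in 𝓝 x, AEStronglyMeasurable (K y) μ := by
    filter_upwards [ball_mem_nhds x hδ] with y hy using (hcont y hy).aestronglyMeasurable
  have hK'_meas : AEStronglyMeasurable (K' x) μ := by
    have m1 : Measurable fun θ : ℝ => fderiv ℂ f (x + circleMap 0 r θ • e) :=
      (measurable_fderiv ℂ f).comp
        ((continuous_const.add ((continuous_circleMap 0 r).smul continuous_const)).measurable)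
    have m2 : Measurable fun θ : ℝ => (circleMap 0 r θ * I * ((circleMap 0 r θ) ^ 2)⁻¹ : ℂ) := by
      apply Continuous.measurable
      exact ((continuous_circleMap 0 r).mul continuous_const).mul
        (((continuous_circleMap 0 r).pow 2).inv₀ fun θ =>
          pow_ne_zero 2 (circleMap_ne_center hr.ne'))
    have m3 : Measurable (K' x) := by
      have : Measurable fun θ : ℝ =>
          ((circleMap 0 r θ * I * ((circleMap 0 r θ) ^ 2)⁻¹ : ℂ),
            fderiv ℂ f (x + circleMap 0 r θ • e)) := m2.prodMk m1
      have hsm : Measurable fun p : ℂ × (E →L[ℂ] ℂ) => p.1 • p.2 :=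
        continuous_smul.measurable
      have := hsm.comp this
      simpa only [hK'def, smul_smul, Function.comp_def] using this
    exact m3.aestronglyMeasurable
  have hbound : ∀ᵐ θ ∂μ, ∀ y ∈ ball x δ, ‖K' y θ‖ ≤ r * ((r ^ 2)⁻¹ * (M / R)) := by
    refine Filter.Eventually.of_forall fun θ => fun y hy => ?_
    have hpt : y + circleMap 0 r θ • e ∈ closedBall x R := hmem y hy _ (habs' θ)
    have hL : ‖fderiv ℂ f (y + circleMap 0 r θ • e)‖ ≤ M / R := hMd _ hpt
    have e1 : ‖(circleMap 0 r θ * I : ℂ)‖ = r := by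
      rw [norm_mul]
      simp only [Complex.norm_I, mul_one]
      exact habs θ
    have e2 : ‖((circleMap 0 r θ) ^ 2 : ℂ)⁻¹‖ = (r ^ 2)⁻¹ := by
      rw [norm_inv, norm_pow]
      rw [habs θ]
    rw [hK'def]
    show ‖(circleMap 0 r θ * I) • ((circleMap 0 r θ) ^ 2)⁻¹ •
        fderiv ℂ f (y + circleMap 0 r θ • e)‖ ≤ r * ((r ^ 2)⁻¹ * (M / R))
    refine le_trans (ContinuousLinearMap.opNorm_smul_le _ _) ?_
    rw [e1]
    refine le_trans (mul_le_mul_of_nonneg_left (ContinuousLinearMap.opNorm_smul_le _ _) hr.le) ?_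
    rw [e2]
    have h2 : (0:ℝ) ≤ (r ^ 2)⁻¹ := by positivity
    exact mul_le_mul_of_nonneg_left (mul_le_mul_of_nonneg_left hL h2) hr.le
  have hbound_int : Integrable (fun _ : ℝ => r * ((r ^ 2)⁻¹ * (M / R))) μ := by
    rw [hμdef]
    exact integrableOn_const measure_Ioc_lt_top.ne
  have hdiff : ∀ᵐ θ ∂μ, ∀ y ∈ ball x δ, HasFDerivAt (fun y' => K y' θ) (K' y θ) y := by
    refine Filter.Eventually.of_forall fun θ => fun y hy => ?_
    have hpt : y + circleMap 0 r θ • e ∈ U := hmemU y hy _ (habs' θ)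
    have hinner : HasFDerivAt (fun y' => f (y' + circleMap 0 r θ • e))
        (fderiv ℂ f (y + circleMap 0 r θ • e)) y := by
      have h1 : HasFDerivAt (fun y' : E => y' + circleMap 0 r θ • e)
          (ContinuousLinearMap.id ℂ E) y := (hasFDerivAt_id y).add_const _
      have h2 := ((hf.differentiableAt (hU.mem_nhds hpt)).hasFDerivAt).comp y h1
      simp only [ContinuousLinearMap.comp_id] at h2
      exact h2
    exact (hinner.const_smul (((circleMap 0 r θ) ^ 2 : ℂ)⁻¹)).const_smul (circleMap 0 r θ * I)
  have HF := hasFDerivAt_integral_of_dominated_of_fderiv_le (ball_mem_nhds x hδ) hK_meas hK_int hK'_meas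
    hbound hbound_int hdiff
  have : DifferentiableAt ℂ (fun y => (2 * π * I : ℂ)⁻¹ • ∫ θ, K y θ ∂μ) x :=
    HF.differentiableAt.const_smul ((2 * π * I : ℂ)⁻¹)
  refine this.congr_of_eventuallyEq ?_
  filter_upwards [ball_mem_nhds x hδ] with y hy using hrep y hy


end Analytic

section Concrete
variable {n : ℕ}

lemma pair_decomp (a b : Fin n → ℂ) :
    ((a, b) : EP n) = (∑ k, a k • ezv n k) + ∑ k, b k • eθv n k := by
  refine Prod.ext ?_ ?_ <;>
    simp [ezv, eθv, Prod.fst_sum, Prod.snd_sum, ← Pi.single_smul, smul_eq_mul,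
      Finset.univ_sum_single]

lemma clm_apply_decomp (L : EP n →L[ℂ] ℂ) (a b : Fin n → ℂ) :
    L (a, b) = ∑ k, a k * L (ezv n k) + ∑ k, b k * L (eθv n k) := by
  rw [pair_decomp a b, map_add, map_sum, map_sum]
  simp [smul_eq_mul]

lemma fderiv_apply_decomp (g : EP n → ℂ) (x : EP n) (a b : Fin n → ℂ) :
    fderiv ℂ g x (a, b) = ∑ k, a k * dz g k x + ∑ k, b k * dθ g k x :=
  clm_apply_decomp _ a b

/-- projections as CLMs -/
noncomputable def pzc (n : ℕ) (k : Fin n) : EP n →L[ℂ] ℂ :=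
  (ContinuousLinearMap.proj k).comp (ContinuousLinearMap.fst ℂ (Fin n → ℂ) (Fin n → ℂ))
noncomputable def pθc (n : ℕ) (k : Fin n) : EP n →L[ℂ] ℂ :=
  (ContinuousLinearMap.proj k).comp (ContinuousLinearMap.snd ℂ (Fin n → ℂ) (Fin n → ℂ))

lemma clm_decomp (L : EP n →L[ℂ] ℂ) :
    L = (∑ k, L (ezv n k) • pzc n k) + ∑ k, L (eθv n k) • pθc n k := by
  apply ContinuousLinearMap.ext
  rintro ⟨a, b⟩
  rw [clm_apply_decomp L a b]
  simp [pzc, pθc, ContinuousLinearMap.sum_apply, mul_comm]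

/-- Schwarz symmetry of second derivatives of a holomorphic function, on an open set. -/
lemma schwarz {U : Set (EP n)} (hU : IsOpen U) {f : EP n → ℂ}
    (hf : DifferentiableOn ℂ f U) {x : EP n} (hx : x ∈ U) (u v : EP n) :
    fderiv ℂ (fun y => fderiv ℂ f y u) x v = fderiv ℂ (fun y => fderiv ℂ f y v) x u := by
  have hA4 : DifferentiableAt ℂ (fderiv ℂ f) x := by
    have hfe : fderiv ℂ f = fun y =>
        (∑ k, (fderiv ℂ f y (ezv n k)) • pzc n k) + ∑ k, (fderiv ℂ f y (eθv n k)) • pθc n k :=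
      funext fun y => clm_decomp _
    rw [hfe]
    refine DifferentiableAt.add ?_ ?_ <;>
      refine DifferentiableAt.fun_sum fun k _ => ?_ <;>
        exact (differentiableAt_fderiv_apply hU hf _ hx).smul_const _
  have hev : ∀ᶠ y in 𝓝 x, HasFDerivAt f (fderiv ℂ f y) y := by
    filter_upwards [hU.mem_nhds hx] with y hy
    exact (hf.differentiableAt (hU.mem_nhds hy)).hasFDerivAt
  have hsymm := second_derivative_symmetric_of_eventually hev hA4.hasFDerivAt u v
  have h1 : ∀ w : EP n, HasFDerivAt (fun y => fderiv ℂ f y w)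
      ((ContinuousLinearMap.apply ℂ ℂ w).comp (fderiv ℂ (fderiv ℂ f) x)) x := by
    intro w
    have := ((ContinuousLinearMap.apply ℂ ℂ w).hasFDerivAt).comp x hA4.hasFDerivAt
    simpa only [Function.comp_def, ContinuousLinearMap.apply_apply] using this
  rw [(h1 u).fderiv, (h1 v).fderiv]
  simpa using hsymm.symm
end Concrete

section Main
variable {n : ℕ}

/-- first θ-derivatives of `W` -/
noncomputable def Wf (n : ℕ) (W : EP n → ℂ) (m : Fin n) : EP n → ℂ := fun y => dθ W m y
/-- second θθ-derivatives of `W` -/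
noncomputable def Sf (n : ℕ) (W : EP n → ℂ) (m p : Fin n) : EP n → ℂ := fun y => dθ (Wf n W m) p y

lemma sum_single_mul (c : Fin n → ℂ) (i : Fin n) :
    ∑ k, (Pi.single i (1:ℂ) : Fin n → ℂ) k * c k = c i := by
  simp [Pi.single_apply]

/-- If the Plebański function `W` satisfies Plebański's second heavenly equations
`∂²W/∂θ_i∂z_j − ∂²W/∂θ_j∂z_i = Σ_{p,q} η_{pq}·(∂²W/∂θ_i∂θ_p)·(∂²W/∂θ_j∂θ_q)`,
then with `W_i = ∂W/∂θ_i`, `v_i = ∂/∂θ_i` and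
`h_i = ∂/∂z_i + Σ_{p,q} η_{pq}·(∂W_i/∂θ_p)·∂/∂θ_q`, the vector fields `h_i + ε⁻¹v_i`
pairwise commute for every `ε ∈ ℂ∖{0}`. -/
theorem heavenly_implies_flat (n : ℕ) (hn : 1 ≤ n) (η : Matrix (Fin n) (Fin n) ℂ)
    (hη : IsUnit η) (hskew : η.transpose = -η)
    (U : Set ((Fin n → ℂ) × (Fin n → ℂ))) (hU : IsOpen U)
    (W : (Fin n → ℂ) × (Fin n → ℂ) → ℂ) (hW : DifferentiableOn ℂ W U)
    (heavenly : ∀ i j, ∀ x ∈ U,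
      dz (fun y => dθ W i y) j x - dz (fun y => dθ W j y) i x =
        ∑ p, ∑ q, η p q * dθ (fun y => dθ W i y) p x * dθ (fun y => dθ W j y) q x)
    (v h : Fin n → ((Fin n → ℂ) × (Fin n → ℂ)) → (Fin n → ℂ) × (Fin n → ℂ))
    (hv : ∀ i x, v i x = (0, Pi.single i 1))
    (hh : ∀ i x, h i x =
      (Pi.single i 1, fun q => ∑ p, η p q * dθ (fun y => dθ W i y) p x)) :
    ∀ ε : ℂ, ε ≠ 0 → ∀ i j, ∀ x ∈ U,
      vecBracket (fun y => h i y + ε⁻¹ • v i y) (fun y => h j y + ε⁻¹ • v j y) x = 0 := by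
  intro ε hε i j x hx
  -- basic differentiability
  have hWfd : ∀ m, DifferentiableOn ℂ (Wf n W m) U := fun m y hy =>
    (differentiableAt_fderiv_apply hU hW _ hy).differentiableWithinAt
  have hSd : ∀ m p, DifferentiableOn ℂ (Sf n W m p) U := fun m p y hy =>
    (differentiableAt_fderiv_apply hU (hWfd m) _ hy).differentiableWithinAt
  have hSx : ∀ m p, DifferentiableAt ℂ (Sf n W m p) x := fun m p =>
    differentiableAt_fderiv_apply hU (hWfd m) _ hx
  -- skew symmetry of η
  have hη' : ∀ a b, η a b = -η b a := by
    intro a b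
    have := congrFun (congrFun hskew b) a
    simpa [Matrix.transpose_apply, Matrix.neg_apply] using this
  -- Schwarz-type commutations
  have hL2 : ∀ m a b, dθ (Sf n W m a) b x = dθ (Sf n W m b) a x := fun m a b =>
    schwarz hU (hWfd m) hx (eθv n a) (eθv n b)
  -- third-derivative total symmetry : `∂θi ∂θp ∂θj W` symmetric in i ↔ j
  have E5 : ∀ p, dθ (Sf n W j p) i x = dθ (Sf n W i p) j x := by
    intro p
    rw [hL2 j p i]
    have hswap : Sf n W j i =ᶠ[𝓝 x] Sf n W i j := by
      filter_upwards [hU.mem_nhds hx] with y hy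
      exact schwarz hU hW hy (eθv n j) (eθv n i)
    have hfe2 := hswap.fderiv_eq (𝕜 := ℂ)
    have h2 : dθ (Sf n W j i) p x = dθ (Sf n W i j) p x := by
      show fderiv ℂ (Sf n W j i) x _ = fderiv ℂ (Sf n W i j) x _
      rw [hfe2]
    rw [h2, hL2 i j p]
  -- the differentiated heavenly equation
  have happ : ∀ p, dz (Sf n W i p) j x - dz (Sf n W j p) i x =
      (∑ a, ∑ b, η a b * (Sf n W i a x * dθ (Sf n W j b) p x)) +
        ∑ a, ∑ b, η a b * (Sf n W j b x * dθ (Sf n W i a) p x) := by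
    intro p
    have hd1 : DifferentiableAt ℂ (fun y => dz (Wf n W i) j y) x :=
      differentiableAt_fderiv_apply hU (hWfd i) _ hx
    have hd2 : DifferentiableAt ℂ (fun y => dz (Wf n W j) i y) x :=
      differentiableAt_fderiv_apply hU (hWfd j) _ hx
    have hL : HasFDerivAt (fun y => dz (Wf n W i) j y - dz (Wf n W j) i y)
        (fderiv ℂ (fun y => dz (Wf n W i) j y) x - fderiv ℂ (fun y => dz (Wf n W j) i y) x) x :=
      hd1.hasFDerivAt.sub hd2.hasFDerivAt
    have hR : HasFDerivAt (fun y => ∑ a, ∑ b, η a b * Sf n W i a y * Sf n W j b y)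
        (∑ a, ∑ b, η a b • (Sf n W i a x • fderiv ℂ (Sf n W j b) x +
          Sf n W j b x • fderiv ℂ (Sf n W i a) x)) x := by
      refine HasFDerivAt.fun_sum fun a _ => HasFDerivAt.fun_sum fun b _ => ?_
      have h1 := ((hSx i a).hasFDerivAt.mul (hSx j b).hasFDerivAt).const_mul (η a b)
      simpa only [Pi.mul_apply, ← mul_assoc] using h1
    have hevf : (fun y => dz (Wf n W i) j y - dz (Wf n W j) i y) =ᶠ[𝓝 x]
        (fun y => ∑ a, ∑ b, η a b * Sf n W i a y * Sf n W j b y) := by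
      filter_upwards [hU.mem_nhds hx] with y hy
      exact heavenly i j y hy
    have hEq := hevf.fderiv_eq (𝕜 := ℂ)
    rw [hL.fderiv, hR.fderiv] at hEq
    have happ' := congrArg (fun L : EP n →L[ℂ] ℂ => L (eθv n p)) hEq
    simp only [ContinuousLinearMap.sub_apply, ContinuousLinearMap.sum_apply,
      ContinuousLinearMap.smul_apply, ContinuousLinearMap.add_apply, smul_eq_mul] at happ'
    have c1 : fderiv ℂ (fun y => dz (Wf n W i) j y) x (eθv n p) = dz (Sf n W i p) j x :=
      schwarz hU (hWfd i) hx (ezv n j) (eθv n p)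
    have c2 : fderiv ℂ (fun y => dz (Wf n W j) i y) x (eθv n p) = dz (Sf n W j p) i x :=
      schwarz hU (hWfd j) hx (ezv n i) (eθv n p)
    rw [c1, c2] at happ'
    have hθred : ∀ (g : EP n → ℂ) (m : Fin n), fderiv ℂ g x (eθv n m) = dθ g m x :=
      fun _ _ => rfl
    simp only [hθred] at happ'
    rw [happ']
    simp_rw [mul_add, Finset.sum_add_distrib]
  -- reshaping the quadratic sums
  have E3 : ∀ p, (∑ k, (∑ a, η a k * Sf n W i a x) * dθ (Sf n W j p) k x)
      = ∑ a, ∑ b, η a b * (Sf n W i a x * dθ (Sf n W j b) p x) := by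
    intro p
    simp_rw [Finset.sum_mul]
    rw [Finset.sum_comm]
    refine Finset.sum_congr rfl fun a _ => Finset.sum_congr rfl fun b _ => ?_
    rw [hL2 j p b]
    ring
  have E4 : ∀ p, (∑ k, (∑ a, η a k * Sf n W j a x) * dθ (Sf n W i p) k x)
      = -∑ a, ∑ b, η a b * (Sf n W j b x * dθ (Sf n W i a) p x) := by
    intro p
    simp_rw [Finset.sum_mul]
    rw [← Finset.sum_neg_distrib]
    refine Finset.sum_congr rfl fun k _ => ?_
    rw [← Finset.sum_neg_distrib]
    refine Finset.sum_congr rfl fun a _ => ?_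
    rw [hL2 i p k, hη' a k]
    ring
  -- the two vector fields in concrete form
  have hfun : ∀ m : Fin n, (fun y => h m y + ε⁻¹ • v m y) =
      fun y => ((Pi.single m 1 : Fin n → ℂ),
        fun q => (∑ p, η p q * Sf n W m p y) + ε⁻¹ * (Pi.single m 1 : Fin n → ℂ) q) := by
    intro m
    funext y
    rw [hh m y, hv m y]
    refine Prod.ext ?_ ?_
    · show Pi.single m 1 + ε⁻¹ • (0 : Fin n → ℂ) = Pi.single m 1
      simp
    · rfl
  -- derivative of each vector field
  have hfield : ∀ m : Fin n, HasFDerivAt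
      (fun y => ((Pi.single m 1 : Fin n → ℂ),
        fun q => (∑ p, η p q * Sf n W m p y) + ε⁻¹ * (Pi.single m 1 : Fin n → ℂ) q))
      ((0 : EP n →L[ℂ] (Fin n → ℂ)).prod
        (ContinuousLinearMap.pi fun q => ∑ p, η p q • fderiv ℂ (Sf n W m p) x)) x := by
    intro m
    refine (hasFDerivAt_const _ _).prodMk (hasFDerivAt_pi.2 fun q => ?_)
    refine HasFDerivAt.add_const _ ?_
    exact HasFDerivAt.fun_sum fun p _ => (hSx m p).hasFDerivAt.const_mul (η p q)
  -- expansion of a directional derivative along the field value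
  have expand : ∀ (g : EP n → ℂ) (m : Fin n),
      fderiv ℂ g x (Pi.single m 1,
        fun q => (∑ p, η p q * Sf n W m p x) + ε⁻¹ * (Pi.single m 1 : Fin n → ℂ) q)
      = dz g m x + (∑ k, (∑ a, η a k * Sf n W m a x) * dθ g k x) + ε⁻¹ * dθ g m x := by
    intro g m
    rw [fderiv_apply_decomp]
    have h1 : ∑ k, (Pi.single m (1:ℂ) : Fin n → ℂ) k * dz g k x = dz g m x :=
      sum_single_mul _ _
    have h2 : ∑ k, (ε⁻¹ * (Pi.single m (1:ℂ) : Fin n → ℂ) k) * dθ g k x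
        = ε⁻¹ * dθ g m x := by
      simp_rw [mul_assoc]
      rw [← Finset.mul_sum, sum_single_mul]
    simp_rw [add_mul]
    rw [Finset.sum_add_distrib, h1, h2]
    ring
  -- final assembly
  rw [hfun i, hfun j]
  show fderiv ℂ _ x _ - fderiv ℂ _ x _ = 0
  rw [(hfield i).fderiv, (hfield j).fderiv]
  simp only [ContinuousLinearMap.prod_apply, ContinuousLinearMap.zero_apply]
  rw [Prod.mk_sub_mk]
  refine Prod.ext (by simp) ?_
  refine funext fun q => ?_
  simp only [Pi.sub_apply, ContinuousLinearMap.pi_apply, ContinuousLinearMap.sum_apply,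
    ContinuousLinearMap.smul_apply, smul_eq_mul, Prod.snd_zero, Pi.zero_apply]
  rw [sub_eq_zero]
  refine Finset.sum_congr rfl fun p _ => ?_
  congr 1
  rw [expand (Sf n W j p) i, expand (Sf n W i p) j, E3 p, E4 p, E5 p]
  linear_combination -(happ p)
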